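/- Let m : ℝ → ℝ be measurable with 0 < c ≤ m(t) ≤ C for all t ∈ ℝ. Then the potential ω_m is well defined on ℂ and sup { |ω_m(z + i) − ω_m(z)| : z ∈ ℂ, Im z ≥ 0 } < ∞. -/

import Mathlib

open MeasureTheory

/-- The modified logarithm `log*|1 - z/t|`. -/
noncomputable def logStar (z : ℂ) (t : ℝ) : ℝ :=
  if 1 < |t| then Real.log (‖1 - z / (t : ℂ)‖) + z.re / t
  else Real.log (‖1 - z / (t : ℂ)‖)

/-- The potential `ω_γ(z) = ∫ log*|1 - z/t| γ(t) dt`. -/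
noncomputable def pot (γ : ℝ → ℝ) (z : ℂ) : ℝ :=
  ∫ t : ℝ, logStar z t * γ t

open Set

noncomputable def phi (s : ℝ) : ℝ := max (-Real.log |s|) 0

lemma phi_nonneg (s : ℝ) : 0 ≤ phi s := le_max_right _ _

lemma phi_meas : Measurable phi :=
  ((Real.measurable_log.comp measurable_abs).neg).max measurable_const

lemma phi_eq_zero {s : ℝ} (hs : 1 ≤ |s|) : phi s = 0 := by
  have h : -Real.log |s| ≤ 0 := neg_nonpos.2 (Real.log_nonneg hs)
  exact max_eq_right h

lemma phi_intOn_Ioc : IntegrableOn phi (Ioc 0 1) := by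
  have h1 : IntegrableOn (fun s : ℝ => -Real.log s) (Ioc 0 1) := by
    have hcont : ContinuousOn (fun s : ℝ => s - s * Real.log s) (Icc 0 1) :=
      (continuous_id.sub Real.continuous_mul_log).continuousOn
    have hderiv : ∀ s ∈ Ioo (0:ℝ) 1,
        HasDerivAt (fun s : ℝ => s - s * Real.log s) (-Real.log s) s := by
      intro s hs
      have h : HasDerivAt (fun s : ℝ => s - s * Real.log s) (1 - (1 * Real.log s + s * s⁻¹)) s :=
        (hasDerivAt_id s).sub ((hasDerivAt_id s).mul (Real.hasDerivAt_log hs.1.ne'))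
      convert h using 1
      simp only [id_eq, one_mul, mul_inv_cancel₀ hs.1.ne']
      ring
    have hpos : ∀ s ∈ Ioo (0:ℝ) 1, 0 ≤ -Real.log s := fun s hs =>
      neg_nonneg.2 (Real.log_nonpos hs.1.le hs.2.le)
    exact intervalIntegral.integrableOn_deriv_of_nonneg hcont hderiv hpos
  apply h1.congr_fun ?_ measurableSet_Ioc
  intro s hs
  have habs : |s| = s := abs_of_pos hs.1
  have h0 : 0 ≤ -Real.log s := neg_nonneg.2 (Real.log_nonpos hs.1.le hs.2)
  unfold phi
  rw [habs]
  exact (max_eq_left h0).symm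

lemma phi_integrable : Integrable phi := by
  have hIcc : IntegrableOn phi (Icc (-1) 1) := by
    have h01 : IntervalIntegrable phi volume 0 1 := by
      rw [intervalIntegrable_iff_integrableOn_Ioc_of_le zero_le_one]
      exact phi_intOn_Ioc
    have hneg : IntervalIntegrable phi volume (-1) 0 := by
      have h := ((IntervalIntegrable.iff_comp_neg).mp h01)
      have hfun : (fun x : ℝ => phi (-x)) = phi := by
        funext x; simp [phi, abs_neg]
      rw [hfun, neg_zero] at h
      exact h.symm
    have h := hneg.trans h01
    rwa [intervalIntegrable_iff_integrableOn_Icc_of_le (by norm_num : (-1:ℝ) ≤ 1)] at h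
  have heq : phi = Set.indicator (Icc (-1) 1) phi := by
    ext s
    by_cases hs : s ∈ Icc (-1:ℝ) 1
    · simp [hs]
    · have h1 : 1 ≤ |s| := by
        by_contra h
        push_neg at h
        exact hs (abs_le.mp h.le)
      simp [hs, phi_eq_zero h1]
  rw [heq]
  rwa [integrable_indicator_iff measurableSet_Icc]

lemma ae_ne_real (c : ℝ) : ∀ᵐ t : ℝ, t ≠ c := by
  rw [ae_iff]
  have : {t : ℝ | ¬ t ≠ c} = {c} := by ext t; simp
  rw [this]
  exact measure_singleton c

lemma abs_log_abs_le (u : ℝ) (hu : u ≠ 0) : abs (Real.log |u|) ≤ phi u + |u| := by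
  have hpos : 0 < |u| := abs_pos.2 hu
  rcases le_or_gt 0 (Real.log |u|) with h | h
  · rw [abs_of_nonneg h]
    have : Real.log |u| ≤ |u| - 1 := Real.log_le_sub_one_of_pos hpos
    have := phi_nonneg u
    linarith
  · rw [abs_of_neg h]
    have : phi u = -Real.log |u| := max_eq_left (by linarith)
    rw [this]
    linarith [abs_nonneg u]

lemma intOn_abs_log_abs (x a b : ℝ) :
    IntegrableOn (fun t : ℝ => abs (Real.log |t - x|)) (Icc a b) := by
  have hmeas : AEStronglyMeasurable (fun t : ℝ => abs (Real.log |t - x|)) (volume.restrict (Icc a b)) :=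
    (((Real.measurable_log.comp measurable_abs).comp (measurable_id.sub measurable_const)).abs).aestronglyMeasurable
  have hg : IntegrableOn (fun t : ℝ => phi (t - x) + (|a - x| + |b - x|)) (Icc a b) :=
    ((phi_integrable.comp_sub_right x).integrableOn).add (integrableOn_const measure_Icc_lt_top.ne)
  refine hg.mono' hmeas ?_
  filter_upwards [ae_restrict_mem measurableSet_Icc, ae_restrict_of_ae (ae_ne_real x)]
    with t ht htx
  have h1 : abs (Real.log |t - x|) ≤ phi (t - x) + |t - x| := abs_log_abs_le _ (sub_ne_zero.2 htx)
  have h2 : |t - x| ≤ |a - x| + |b - x| := by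
    rw [abs_sub_le_iff]
    constructor
    · rcases abs_le.mp (le_refl |b - x|) with _
      have := ht.2
      have hb := le_abs_self (b - x)
      linarith [abs_nonneg (a - x)]
    · have := ht.1
      have ha := neg_abs_le (a - x)
      linarith [abs_nonneg (b - x)]
  calc ‖abs (Real.log |t - x|)‖ = abs (Real.log |t - x|) := by rw [Real.norm_eq_abs, abs_abs]
    _ ≤ phi (t - x) + (|a - x| + |b - x|) := by linarith

lemma intOn_log_cabs (z : ℂ) (a b : ℝ) :
    IntegrableOn (fun t : ℝ => Real.log (‖(t : ℂ) - z‖)) (Icc a b) := by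
  have hmeas : AEStronglyMeasurable (fun t : ℝ => Real.log (‖(t : ℂ) - z‖))
      (volume.restrict (Icc a b)) := by
    apply Measurable.aestronglyMeasurable
    exact Real.measurable_log.comp
      ((continuous_norm.comp (Complex.continuous_ofReal.sub continuous_const)).measurable)
  set K : ℝ := |a| + |b| + ‖z‖ with hK
  have hg : IntegrableOn (fun t : ℝ => abs (Real.log |t - z.re|) + K) (Icc a b) :=
    (intOn_abs_log_abs z.re a b).add (integrableOn_const measure_Icc_lt_top.ne)
  refine hg.mono' hmeas ?_
  filter_upwards [ae_restrict_mem measurableSet_Icc, ae_restrict_of_ae (ae_ne_real z.re)]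
    with t ht htx
  have hre : ((t : ℂ) - z).re = t - z.re := by simp
  have hlow : |t - z.re| ≤ ‖(t : ℂ) - z‖ := by
    rw [← hre]; exact Complex.abs_re_le_norm _
  have hposl : (0 : ℝ) < |t - z.re| := abs_pos.2 (sub_ne_zero.2 htx)
  have hup : ‖(t : ℂ) - z‖ ≤ |t| + ‖z‖ := by
    have h := norm_sub_le ((t : ℂ)) z
    simpa [Complex.norm_real, Real.norm_eq_abs] using h
  have hKt : |t| + ‖z‖ ≤ K := by
    rw [hK]
    have hta : |t| ≤ |a| + |b| := by
      rcases abs_cases t with ⟨he, _⟩ | ⟨he, _⟩ <;> rw [he]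
      · linarith [le_abs_self b, abs_nonneg a, ht.2]
      · linarith [neg_le_abs a, abs_nonneg b, ht.1]
    linarith
  rw [Real.norm_eq_abs]
  rcases le_or_gt 0 (Real.log (‖(t : ℂ) - z‖)) with h | h
  · rw [abs_of_nonneg h]
    have hp : (0:ℝ) < ‖(t : ℂ) - z‖ := lt_of_lt_of_le hposl hlow
    have := Real.log_le_sub_one_of_pos hp
    have := abs_nonneg (Real.log |t - z.re|)
    linarith
  · rw [abs_of_neg h]
    have : Real.log |t - z.re| ≤ Real.log (‖(t:ℂ) - z‖) :=
      Real.log_le_log hposl hlow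
    have hK0 : 0 ≤ K := by positivity
    have := neg_abs_le (Real.log |t - z.re|)
    linarith

lemma meas_logStar (z : ℂ) : Measurable (logStar z) := by
  unfold logStar
  have hb : Measurable fun t : ℝ => Real.log (‖1 - z / (t : ℂ)‖) := by
    apply Real.measurable_log.comp
    apply continuous_norm.measurable.comp
    apply measurable_const.sub
    simp_rw [div_eq_mul_inv]
    exact measurable_const.mul (Complex.measurable_ofReal.inv)
  have hd : Measurable fun t : ℝ => z.re / t := by
    simp_rw [div_eq_mul_inv]
    exact measurable_const.mul measurable_inv
  exact Measurable.ite (measurableSet_lt measurable_const measurable_abs) (hb.add hd) hb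

lemma logStar_eq (w : ℂ) {t : ℝ} (ht : t ≠ 0) (htw : (t : ℂ) ≠ w) :
    logStar w t = Real.log (‖(t : ℂ) - w‖) - Real.log |t|
      + (if 1 < |t| then w.re / t else 0) := by
  have htc : (t : ℂ) ≠ 0 := Complex.ofReal_ne_zero.2 ht
  have habs : ‖1 - w / (t : ℂ)‖ = ‖(t : ℂ) - w‖ / |t| := by
    have h : 1 - w / (t : ℂ) = ((t : ℂ) - w) / (t : ℂ) := by field_simp
    rw [h, norm_div, Complex.norm_real, Real.norm_eq_abs]
  have hlog : Real.log (‖1 - w / (t : ℂ)‖)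
      = Real.log (‖(t : ℂ) - w‖) - Real.log |t| := by
    rw [habs, Real.log_div ((norm_ne_zero_iff.mpr (sub_ne_zero.2 htw))) (abs_ne_zero.2 ht)]
  unfold logStar
  by_cases h : 1 < |t| <;> simp [h, hlog]

lemma ofReal_ne_of_ne_re {w : ℂ} {t : ℝ} (h : t ≠ w.re) : (t : ℂ) ≠ w := by
  intro hh
  apply h
  rw [← hh, Complex.ofReal_re]

lemma intOn_logStar_Icc (z : ℂ) (a b : ℝ) : IntegrableOn (logStar z) (Icc a b) := by
  have hF : IntegrableOn (fun t : ℝ => Real.log (‖(t : ℂ) - z‖) - Real.log |t|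
      + (if 1 < |t| then z.re / t else 0)) (Icc a b) := by
    apply Integrable.add
    · apply Integrable.sub (intOn_log_cabs z a b)
      have h0 := intOn_log_cabs 0 a b
      simpa [Complex.norm_real, Real.norm_eq_abs, IntegrableOn] using h0
    · have hmeas : Measurable fun t : ℝ => (if 1 < |t| then z.re / t else 0) :=
        Measurable.ite (measurableSet_lt measurable_const measurable_abs)
          (measurable_const.div measurable_id) measurable_const
      have hconst : IntegrableOn (fun _ : ℝ => |z.re|) (Icc a b) :=
        integrableOn_const measure_Icc_lt_top.ne
      refine hconst.mono' hmeas.aestronglyMeasurable ?_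
      filter_upwards with t
      rw [Real.norm_eq_abs]
      by_cases h : 1 < |t|
      · simp only [h, if_true]
        rw [abs_div]
        exact div_le_self (abs_nonneg _) h.le
      · simp [h]
  apply Integrable.congr hF
  filter_upwards [ae_restrict_of_ae (ae_ne_real 0), ae_restrict_of_ae (ae_ne_real z.re)]
    with t ht0 htz
  exact (logStar_eq z ht0 (ofReal_ne_of_ne_re htz)).symm

lemma intOn_logStar_tail (z : ℂ) :
    IntegrableOn (logStar z) {t : ℝ | 2 * ‖z‖ + 2 ≤ |t|} := by
  set R : ℝ := 2 * ‖z‖ + 2 with hRdef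
  have habsz : 0 ≤ ‖z‖ := norm_nonneg z
  have hs : MeasurableSet {t : ℝ | R ≤ |t|} := measurableSet_le measurable_const measurable_abs
  have hg : Integrable (fun t : ℝ => 2 * (‖z‖) ^ 2 * (1 + t ^ 2)⁻¹) :=
    integrable_inv_one_add_sq.const_mul _
  refine (hg.integrableOn).mono' ((meas_logStar z).aestronglyMeasurable) ?_
  filter_upwards [ae_restrict_mem hs] with t ht
  have htR : R ≤ |t| := ht
  have ht2 : (2 : ℝ) ≤ |t| := le_trans (by linarith) htR
  have ht1 : 1 < |t| := by linarith
  have ht0 : t ≠ 0 := by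
    intro h; rw [h] at ht2; simp at ht2; linarith
  set w : ℂ := z / (t : ℂ) with hw
  have hwn : ‖w‖ = ‖z‖ / |t| := by
    rw [hw, norm_div, Complex.norm_real, Real.norm_eq_abs]
  have hwhalf : ‖w‖ ≤ 1 / 2 := by
    rw [hwn]
    rw [div_le_div_iff₀ (by linarith) (by norm_num)]
    linarith
  have hwre : w.re = z.re / t := by
    rw [hw, Complex.div_ofReal_re]
  have hls : logStar z t = (Complex.log (1 - w) + w).re := by
    unfold logStar
    rw [if_pos ht1, Complex.add_re, Complex.log_re, hwre, hw]
  have hkey : ‖Complex.log (1 - w) + w‖ ≤ ‖w‖ ^ 2 := by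
    have hlt : ‖(-w)‖ < 1 := by rw [norm_neg]; linarith
    have h := Complex.norm_log_one_add_sub_self_le hlt
    have heq : Complex.log (1 + -w) - -w = Complex.log (1 - w) + w := by
      rw [sub_eq_add_neg]; ring_nf
    rw [heq, norm_neg] at h
    have hinv : (1 - ‖w‖)⁻¹ ≤ 2 := by
      rw [inv_le_comm₀ (by linarith) (by norm_num)]
      linarith
    calc ‖Complex.log (1 - w) + w‖ ≤ ‖w‖ ^ 2 * (1 - ‖w‖)⁻¹ / 2 := h
      _ ≤ ‖w‖ ^ 2 * 2 / 2 := by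
          have := mul_le_mul_of_nonneg_left hinv (by positivity : (0:ℝ) ≤ ‖w‖ ^ 2)
          linarith
      _ = ‖w‖ ^ 2 := by ring
  have habs : |logStar z t| ≤ ‖w‖ ^ 2 := by
    rw [hls]
    exact le_trans (Complex.abs_re_le_norm _) hkey
  rw [Real.norm_eq_abs]
  refine le_trans habs ?_
  rw [hwn, div_pow, sq_abs]
  rw [div_le_iff₀ (by positivity : (0:ℝ) < t ^ 2)]
  have h1t : (1 : ℝ) + t ^ 2 ≤ 2 * t ^ 2 := by
    have h : (1:ℝ) ≤ t ^ 2 := by nlinarith [sq_abs t]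
    linarith
  calc ‖z‖ ^ 2 = ‖z‖ ^ 2 * ((1 + t ^ 2) * (1 + t ^ 2)⁻¹) := by
        rw [mul_inv_cancel₀ (by positivity)]; ring
    _ ≤ 2 * ‖z‖ ^ 2 * (1 + t ^ 2)⁻¹ * t ^ 2 := by
        have hnn : (0:ℝ) ≤ ‖z‖ ^ 2 * (1 + t ^ 2)⁻¹ := by positivity
        have h2 := mul_le_mul_of_nonneg_left h1t hnn
        nlinarith [h2]

lemma integrable_logStar (z : ℂ) : Integrable (logStar z) := by
  set R : ℝ := 2 * ‖z‖ + 2 with hRdef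
  rw [← integrableOn_univ]
  have hsub : (univ : Set ℝ) ⊆ Icc (-R) R ∪ {t : ℝ | R ≤ |t|} := by
    intro t _
    rcases le_or_gt |t| R with h | h
    · exact Or.inl (abs_le.mp h)
    · exact Or.inr h.le
  exact ((intOn_logStar_Icc z (-R) R).union (intOn_logStar_tail z)).mono_set hsub

noncomputable def Dz (z : ℂ) (t : ℝ) : ℝ :=
  Real.log (‖(t : ℂ) - (z + Complex.I)‖) - Real.log (‖(t : ℂ) - z‖)

lemma log_cabs_sub (z : ℂ) (t : ℝ) :
    Real.log (‖(t : ℂ) - z‖) = Real.log ((t - z.re) ^ 2 + z.im ^ 2) / 2 := by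
  rw [Complex.norm_def, Real.log_sqrt (Complex.normSq_nonneg _)]
  congr 2
  rw [Complex.normSq_apply]
  simp only [Complex.sub_re, Complex.ofReal_re, Complex.sub_im, Complex.ofReal_im]
  ring

lemma Dz_formula (z : ℂ) (t : ℝ) :
    Dz z t = (Real.log ((t - z.re) ^ 2 + (z.im + 1) ^ 2)
      - Real.log ((t - z.re) ^ 2 + z.im ^ 2)) / 2 := by
  unfold Dz
  rw [log_cabs_sub, log_cabs_sub]
  simp only [Complex.add_re, Complex.I_re, add_zero, Complex.add_im, Complex.I_im]
  ring

lemma Dz_nonneg {z : ℂ} (hz : 0 ≤ z.im) (t : ℝ) : 0 ≤ Dz z t := by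
  rw [Dz_formula]
  set s := t - z.re
  set y := z.im
  rcases eq_or_lt_of_le (by positivity : (0:ℝ) ≤ s ^ 2 + y ^ 2) with h | h
  · have h1 : (1:ℝ) ≤ s ^ 2 + (y + 1) ^ 2 := by nlinarith [sq_nonneg s, sq_nonneg y]
    rw [← h]
    have := Real.log_nonneg h1
    simp only [Real.log_zero]
    linarith
  · have hle : s ^ 2 + y ^ 2 ≤ s ^ 2 + (y + 1) ^ 2 := by nlinarith
    have := Real.log_le_log h hle
    linarith

lemma Dz_le_inv {z : ℂ} (hz : 0 ≤ z.im) {t : ℝ}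
    (hA : 0 < (t - z.re) ^ 2 + z.im ^ 2) :
    Dz z t ≤ (2 * z.im + 1) / (2 * ((t - z.re) ^ 2 + z.im ^ 2)) := by
  rw [Dz_formula]
  set s := t - z.re
  set y := z.im
  set A := s ^ 2 + y ^ 2 with hAdef
  have hB : s ^ 2 + (y + 1) ^ 2 = A + (2 * y + 1) := by rw [hAdef]; ring
  have hBpos : (0:ℝ) < 2 * y + 1 := by linarith
  have hlog : Real.log (A + (2 * y + 1)) - Real.log A ≤ (2 * y + 1) / A := by
    rw [← Real.log_div (by linarith) (ne_of_gt hA)]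
    have hq : (0:ℝ) < (A + (2 * y + 1)) / A := by positivity
    have := Real.log_le_sub_one_of_pos hq
    have heq : (A + (2 * y + 1)) / A - 1 = (2 * y + 1) / A := by field_simp; ring
    linarith [heq ▸ this]
  rw [hB]
  rw [div_le_div_iff₀ (by norm_num) (by positivity)]
  have h3 := mul_le_mul_of_nonneg_right hlog (by positivity : (0:ℝ) ≤ 2 * A)
  have h4 : (2 * y + 1) / A * (2 * A) = (2 * y + 1) * 2 := by field_simp
  linarith [h4 ▸ h3]

lemma Dz_le_log {z : ℂ} (hz : 0 ≤ z.im) (hy : z.im ≤ 1 / 2) {t : ℝ}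
    (hs : t ≠ z.re) (h1 : |t - z.re| ≤ 1) :
    Dz z t ≤ Real.log 4 - Real.log |t - z.re| := by
  rw [Dz_formula]
  set s := t - z.re with hsdef
  set y := z.im
  have hspos : (0:ℝ) < s ^ 2 := by
    have : s ≠ 0 := sub_ne_zero.2 hs
    positivity
  have hlow : Real.log (s ^ 2) ≤ Real.log (s ^ 2 + y ^ 2) :=
    Real.log_le_log hspos (by nlinarith [sq_nonneg y])
  have hupv : s ^ 2 + (y + 1) ^ 2 ≤ 16 := by
    have hs2 : s ^ 2 ≤ 1 := by nlinarith [sq_abs s, abs_nonneg s]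
    nlinarith
  have hup : Real.log (s ^ 2 + (y + 1) ^ 2) ≤ Real.log 16 :=
    Real.log_le_log (by positivity) hupv
  have h16 : Real.log 16 = 2 * Real.log 4 := by
    rw [show (16:ℝ) = 4 ^ 2 by norm_num, Real.log_pow]
    norm_num
  have hsq : Real.log (s ^ 2) = 2 * Real.log |s| := by
    rw [← sq_abs, Real.log_pow]
    norm_num
  linarith

lemma ofReal_ne_add_I {z : ℂ} (hz : 0 ≤ z.im) (t : ℝ) : (t : ℂ) ≠ z + Complex.I := by
  intro h
  have := congrArg Complex.im h
  simp only [Complex.ofReal_im, Complex.add_im, Complex.I_im] at this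
  linarith

lemma diff_logStar_eq {z : ℂ} (hz : 0 ≤ z.im) {t : ℝ} (ht0 : t ≠ 0) (htz : t ≠ z.re) :
    logStar (z + Complex.I) t - logStar z t = Dz z t := by
  rw [logStar_eq (z + Complex.I) ht0 (ofReal_ne_add_I hz t),
    logStar_eq z ht0 (ofReal_ne_of_ne_re htz)]
  simp only [Complex.add_re, Complex.I_re, add_zero]
  unfold Dz
  ring

lemma poisson_eq (x y : ℝ) (hy : y ≠ 0) :
    (fun t : ℝ => ((t - x) ^ 2 + y ^ 2)⁻¹)
      = fun t : ℝ => y⁻¹ * y⁻¹ * (1 + ((t - x) * y⁻¹) ^ 2)⁻¹ := by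
  funext t
  rw [eq_comm]
  have h : (1 + ((t - x) * y⁻¹) ^ 2) = ((t - x) ^ 2 + y ^ 2) * (y⁻¹ * y⁻¹) := by
    field_simp
    ring
  rw [h, mul_inv]
  have hyy : (y⁻¹ * y⁻¹)⁻¹ = y * y := by rw [mul_inv, inv_inv]
  rw [hyy]
  field_simp

lemma poisson_integrable (x y : ℝ) (hy : y ≠ 0) :
    Integrable (fun t : ℝ => ((t - x) ^ 2 + y ^ 2)⁻¹) := by
  rw [poisson_eq x y hy]
  apply Integrable.const_mul
  have h1 : Integrable (fun u : ℝ => (1 + (u * y⁻¹) ^ 2)⁻¹) := by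
    have := (integrable_comp_smul_iff (volume : Measure ℝ)
      (fun u : ℝ => (1 + u ^ 2)⁻¹) (inv_ne_zero hy)).mpr integrable_inv_one_add_sq
    simpa [smul_eq_mul, mul_comm] using this
  exact h1.comp_sub_right x

lemma poisson_integral (x y : ℝ) (hy : 0 < y) :
    ∫ t : ℝ, ((t - x) ^ 2 + y ^ 2)⁻¹ = Real.pi / y := by
  rw [poisson_eq x y hy.ne']
  rw [MeasureTheory.integral_const_mul]
  have h1 : ∫ t : ℝ, (1 + ((t - x) * y⁻¹) ^ 2)⁻¹
      = ∫ u : ℝ, (1 + (u * y⁻¹) ^ 2)⁻¹ :=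
    integral_sub_right_eq_self (fun u : ℝ => (1 + (u * y⁻¹) ^ 2)⁻¹) x
  have h2 : ∫ u : ℝ, (1 + (u * y⁻¹) ^ 2)⁻¹ = |y| • ∫ u : ℝ, (1 + u ^ 2)⁻¹ := by
    have := MeasureTheory.Measure.integral_comp_div (fun u : ℝ => (1 + u ^ 2)⁻¹) y
    simpa [div_eq_mul_inv] using this
  rw [h1, h2, integral_univ_inv_one_add_sq, abs_of_pos hy, smul_eq_mul]
  field_simp

noncomputable def Psi (s : ℝ) : ℝ :=
  if |s| ≤ 1 then Real.log 4 - Real.log |s| else (s ^ 2)⁻¹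

lemma Psi_integrable : Integrable Psi := by
  have hmeas : Measurable Psi := by
    apply Measurable.ite (measurableSet_le measurable_abs measurable_const)
    · exact measurable_const.sub (Real.measurable_log.comp measurable_abs)
    · exact (measurable_id.pow_const 2).inv
  rw [← integrableOn_univ]
  have hsub : (univ : Set ℝ) ⊆ Icc (-1) 1 ∪ {s : ℝ | ¬ |s| ≤ 1} := by
    intro s _
    rcases le_or_gt |s| 1 with h | h
    · exact Or.inl (abs_le.mp h)
    · exact Or.inr (not_le.2 h)
  refine IntegrableOn.mono_set ?_ hsub
  apply IntegrableOn.union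
  · -- on Icc (-1) 1
    have hlog : IntegrableOn (fun s : ℝ => Real.log |s|) (Icc (-1) 1) := by
      have habs := intOn_abs_log_abs 0 (-1) 1
      refine habs.mono' ?_ ?_
      · exact (Real.measurable_log.comp measurable_abs).aestronglyMeasurable
      · filter_upwards with s
        rw [Real.norm_eq_abs]
        simp only [sub_zero]
        exact le_refl _
    have hF : IntegrableOn (fun s : ℝ => Real.log 4 - Real.log |s|) (Icc (-1) 1) :=
      (integrableOn_const measure_Icc_lt_top.ne).sub hlog
    apply hF.congr_fun ?_ measurableSet_Icc
    intro s hs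
    have : |s| ≤ 1 := abs_le.mpr ⟨hs.1, hs.2⟩
    simp [Psi, this]
  · -- on {|s| > 1}
    have hset : MeasurableSet {s : ℝ | ¬ |s| ≤ 1} :=
      (measurableSet_le measurable_abs measurable_const).compl
    have hg : Integrable (fun s : ℝ => 2 * (1 + s ^ 2)⁻¹) :=
      integrable_inv_one_add_sq.const_mul 2
    refine hg.integrableOn.mono' hmeas.aestronglyMeasurable ?_
    filter_upwards [ae_restrict_mem hset] with s hsmem
    have hs1 : 1 < |s| := not_le.mp hsmem
    have hs2 : 1 < s ^ 2 := by nlinarith [sq_abs s]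
    have : Psi s = (s ^ 2)⁻¹ := if_neg (not_le.2 hs1)
    rw [Real.norm_eq_abs, this, abs_of_nonneg (by positivity : (0:ℝ) ≤ (s ^ 2)⁻¹)]
    have hs2' : (0:ℝ) < s ^ 2 := by linarith
    have hpos : (0:ℝ) < 1 + s ^ 2 := by positivity
    rw [inv_eq_one_div, inv_eq_one_div, mul_one_div, div_le_div_iff₀ hs2' hpos]
    linarith
lemma Psi_nonneg (s : ℝ) : 0 ≤ Psi s := by
  unfold Psi
  by_cases h : |s| ≤ 1
  · simp only [h, if_true]
    have h4 : Real.log |s| ≤ Real.log 4 := by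
      rcases eq_or_ne s 0 with rfl | hs
      · simp [Real.log_nonneg (by norm_num : (1:ℝ) ≤ 4)]
      · exact Real.log_le_log (abs_pos.2 hs) (by linarith [le_of_lt (lt_of_le_of_lt h (by norm_num : (1:ℝ) < 4))])
    linarith
  · simp only [h, if_false]
    positivity

theorem stmt_12 (m : ℝ → ℝ) (hm : Measurable m)
    (c C : ℝ) (hc : 0 < c)
    (hbound : ∀ t : ℝ, c ≤ m t ∧ m t ≤ C) :
    (∀ z : ℂ, Integrable (fun t : ℝ => logStar z t * m t)) ∧
    ∃ M : ℝ, ∀ z : ℂ, 0 ≤ z.im → |pot m (z + Complex.I) - pot m z| ≤ M := by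
  have hC0 : 0 < C := hc.trans_le ((hbound 0).1.trans (hbound 0).2)
  have hmpos : ∀ t, 0 < m t := fun t => hc.trans_le (hbound t).1
  have hpart1 : ∀ z : ℂ, Integrable (fun t : ℝ => logStar z t * m t) := by
    intro z
    have h : Integrable (fun t : ℝ => m t * logStar z t) := by
      refine (integrable_logStar z).bdd_mul hm.aestronglyMeasurable (c := C) (Filter.Eventually.of_forall fun t => ?_)
      rw [Real.norm_eq_abs, abs_of_pos (hmpos t)]
      exact (hbound t).2
    have h2 : (fun t : ℝ => logStar z t * m t) = fun t : ℝ => m t * logStar z t := by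
      funext t; ring
    rw [h2]; exact h
  refine ⟨hpart1, ⟨max (C * (2 * Real.pi)) (C * ∫ s : ℝ, Psi s), ?_⟩⟩
  intro z hz
  have hint1 := hpart1 (z + Complex.I)
  have hint2 := hpart1 z
  have hae : ∀ᵐ t : ℝ, logStar (z + Complex.I) t * m t - logStar z t * m t
      = Dz z t * m t := by
    filter_upwards [ae_ne_real 0, ae_ne_real z.re] with t ht0 htz
    rw [← sub_mul, diff_logStar_eq hz ht0 htz]
  have hDm : Integrable (fun t : ℝ => Dz z t * m t) := (hint1.sub hint2).congr hae
  have hval : pot m (z + Complex.I) - pot m z = ∫ t : ℝ, Dz z t * m t := by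
    unfold pot
    rw [← integral_sub hint1 hint2]
    exact integral_congr_ae hae
  have hnonneg : 0 ≤ ∫ t : ℝ, Dz z t * m t :=
    integral_nonneg fun t => mul_nonneg (Dz_nonneg hz t) (hmpos t).le
  rw [hval, abs_of_nonneg hnonneg]
  rcases le_or_gt (1 / 2 : ℝ) z.im with hy | hy
  · -- y ≥ 1/2
    have hy0 : 0 < z.im := lt_of_lt_of_le (by norm_num) hy
    set G : ℝ → ℝ := fun t => C * ((2 * z.im + 1) / 2) * ((t - z.re) ^ 2 + z.im ^ 2)⁻¹
      with hGdef
    have hGint : Integrable G :=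
      (poisson_integrable z.re z.im hy0.ne').const_mul _
    have hle : ∀ᵐ t : ℝ, Dz z t * m t ≤ G t := by
      filter_upwards with t
      have hA : (0:ℝ) < (t - z.re) ^ 2 + z.im ^ 2 := by positivity
      have h1 : Dz z t ≤ (2 * z.im + 1) / (2 * ((t - z.re) ^ 2 + z.im ^ 2)) :=
        Dz_le_inv hz hA
      have h2 : Dz z t * m t ≤ Dz z t * C :=
        mul_le_mul_of_nonneg_left (hbound t).2 (Dz_nonneg hz t)
      have h3 : Dz z t * C ≤ (2 * z.im + 1) / (2 * ((t - z.re) ^ 2 + z.im ^ 2)) * C :=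
        mul_le_mul_of_nonneg_right h1 hC0.le
      have h4 : (2 * z.im + 1) / (2 * ((t - z.re) ^ 2 + z.im ^ 2)) * C = G t := by
        rw [hGdef]
        field_simp
      linarith
    have hmono := integral_mono_ae hDm hGint hle
    have hGval : ∫ t : ℝ, G t = C * ((2 * z.im + 1) / 2) * (Real.pi / z.im) := by
      rw [hGdef]
      rw [MeasureTheory.integral_const_mul]
      rw [poisson_integral z.re z.im hy0]
    have hineq : (2 * z.im + 1) / 2 * (Real.pi / z.im) ≤ 2 * Real.pi := by
      rw [div_mul_div_comm, div_le_iff₀ (by positivity : (0:ℝ) < 2 * z.im)]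
      nlinarith [mul_nonneg (by linarith : (0:ℝ) ≤ 2 * z.im - 1) Real.pi_pos.le]
    have hfinal : C * ((2 * z.im + 1) / 2) * (Real.pi / z.im) ≤ C * (2 * Real.pi) := by
      calc C * ((2 * z.im + 1) / 2) * (Real.pi / z.im)
          = C * ((2 * z.im + 1) / 2 * (Real.pi / z.im)) := by ring
        _ ≤ C * (2 * Real.pi) := mul_le_mul_of_nonneg_left hineq hC0.le
    refine le_trans hmono ?_
    rw [hGval]
    exact le_trans hfinal (le_max_left _ _)
  · -- y < 1/2
    have hG2int : Integrable (fun t : ℝ => C * Psi (t - z.re)) :=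
      (Psi_integrable.comp_sub_right z.re).const_mul C
    have hle : ∀ᵐ t : ℝ, Dz z t * m t ≤ C * Psi (t - z.re) := by
      filter_upwards [ae_ne_real z.re] with t htz
      have hsne : t - z.re ≠ 0 := sub_ne_zero.2 htz
      have hDP : Dz z t ≤ Psi (t - z.re) := by
        by_cases h1 : |t - z.re| ≤ 1
        · rw [Psi, if_pos h1]
          exact Dz_le_log hz hy.le htz h1
        · rw [Psi, if_neg h1]
          push_neg at h1
          have hs2 : (1:ℝ) < (t - z.re) ^ 2 := by nlinarith [sq_abs (t - z.re)]
          have hA : (0:ℝ) < (t - z.re) ^ 2 + z.im ^ 2 := by positivity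
          refine le_trans (Dz_le_inv hz hA) ?_
          rw [← one_div ((t - z.re) ^ 2)]
          rw [div_le_div_iff₀ (by positivity) (by linarith)]
          nlinarith [sq_nonneg z.im]
      have h2 : Dz z t * m t ≤ Dz z t * C :=
        mul_le_mul_of_nonneg_left (hbound t).2 (Dz_nonneg hz t)
      have h3 : Dz z t * C ≤ Psi (t - z.re) * C :=
        mul_le_mul_of_nonneg_right hDP hC0.le
      linarith
    have hmono := integral_mono_ae hDm hG2int hle
    have hval2 : ∫ t : ℝ, C * Psi (t - z.re) = C * ∫ s : ℝ, Psi s := by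
      rw [MeasureTheory.integral_const_mul]
      congr 1
      exact integral_sub_right_eq_self Psi z.re
    refine le_trans hmono ?_
    rw [hval2]
    exact le_max_right _ _
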